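/- Consider EMA heavy-ball momentum gradient descent on the one-dimensional quadratic loss L(θ) = ½·λθ² with λ > 0: given β ∈ [0, 1) and η > 0, the iteration is m_{t+1} = β·m_t + (1 − β)·λ·θ_t and θ_{t+1} = θ_t − η·m_{t+1}. If λ < (2 + 2β)/(η·(1 − β)), then for every initialization (θ₀, m₀) ∈ ℝ², the iterates satisfy θ_t → 0 and m_t → 0 as t → ∞. -/

import Mathlib

open Filter

/-- If `z (t+1) = r * z t + u t` with `‖r‖ < 1` and `u → 0`, then `z → 0`. -/
lemma geom_perturb {r : ℂ} (hr : ‖r‖ < 1) (z u : ℕ → ℂ)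
    (hu : Tendsto u atTop (nhds 0)) (h : ∀ t, z (t + 1) = r * z t + u t) :
    Tendsto z atTop (nhds 0) := by
  have hr0 : 0 ≤ ‖r‖ := norm_nonneg r
  have h1r : 0 < 1 - ‖r‖ := by linarith
  rw [NormedAddCommGroup.tendsto_nhds_zero] at hu ⊢
  intro ε hε
  set δ := ε * (1 - ‖r‖) / 3 with hδdef
  have hδ : 0 < δ := by positivity
  obtain ⟨N, hN⟩ := eventually_atTop.mp (hu δ hδ)
  have hfield : ‖r‖ * (δ / (1 - ‖r‖)) + δ = δ / (1 - ‖r‖) := by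
    have hd : δ / (1 - ‖r‖) * (1 - ‖r‖) = δ := div_mul_cancel₀ δ h1r.ne'
    linear_combination -hd
  have key : ∀ k, ‖z (N + k)‖ ≤ ‖r‖ ^ k * ‖z N‖ + δ / (1 - ‖r‖) := by
    intro k
    induction k with
    | zero =>
      simp only [Nat.add_zero, pow_zero, one_mul]
      have : 0 ≤ δ / (1 - ‖r‖) := by positivity
      linarith
    | succ k ih =>
      have hZ : z (N + (k + 1)) = r * z (N + k) + u (N + k) := h (N + k)
      have hnu : ‖u (N + k)‖ < δ := hN (N + k) (Nat.le_add_right _ _)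
      calc ‖z (N + (k + 1))‖ ≤ ‖r * z (N + k)‖ + ‖u (N + k)‖ := by
            rw [hZ]; exact norm_add_le _ _
        _ = ‖r‖ * ‖z (N + k)‖ + ‖u (N + k)‖ := by rw [norm_mul]
        _ ≤ ‖r‖ * (‖r‖ ^ k * ‖z N‖ + δ / (1 - ‖r‖)) + δ := by
            have := mul_le_mul_of_nonneg_left ih hr0
            linarith
        _ = ‖r‖ ^ (k + 1) * ‖z N‖ + (‖r‖ * (δ / (1 - ‖r‖)) + δ) := by ring
        _ = ‖r‖ ^ (k + 1) * ‖z N‖ + δ / (1 - ‖r‖) := by rw [hfield]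
  have hgeo : Tendsto (fun k : ℕ => ‖r‖ ^ k * ‖z N‖) atTop (nhds 0) := by
    have h1 : |‖r‖| < 1 := by rwa [abs_of_nonneg hr0]
    have := tendsto_pow_atTop_nhds_zero_of_abs_lt_one h1
    simpa using this.mul_const ‖z N‖
  obtain ⟨N₂, hN₂⟩ := Metric.tendsto_atTop.mp hgeo δ hδ
  refine eventually_atTop.mpr ⟨N + N₂, fun t ht => ?_⟩
  obtain ⟨k, rfl⟩ : ∃ k, t = N + k := ⟨t - N, by omega⟩
  have hk : N₂ ≤ k := by omega
  have h1 := key k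
  have h2 := hN₂ k hk
  rw [Real.dist_eq, sub_zero] at h2
  have h2' : ‖r‖ ^ k * ‖z N‖ < δ := by
    have : |‖r‖ ^ k * ‖z N‖| = ‖r‖ ^ k * ‖z N‖ := abs_of_nonneg (by positivity)
    linarith [this ▸ h2]
  have hdd : δ / (1 - ‖r‖) = ε / 3 := by
    rw [div_eq_div_iff h1r.ne' (by norm_num : (3:ℝ) ≠ 0), hδdef]; ring
  have hδε : δ ≤ ε / 3 := by rw [hδdef]; nlinarith
  linarith

/-- Convergence of a second-order linear recurrence whose characteristic roots
(in `ℂ`) both have norm less than one. -/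
lemma second_order_tendsto (T b : ℝ) (r₁ r₂ : ℂ)
    (hsum : r₁ + r₂ = (T : ℂ)) (hprod : r₁ * r₂ = (b : ℂ))
    (h1 : ‖r₁‖ < 1) (h2 : ‖r₂‖ < 1) (θ : ℕ → ℝ)
    (hrec : ∀ t, θ (t + 2) = T * θ (t + 1) - b * θ t) :
    Tendsto θ atTop (nhds 0) := by
  set z : ℕ → ℂ := fun t => (θ t : ℂ) with hzdef
  have hz : ∀ t, z (t + 2) = (T : ℂ) * z (t + 1) - (b : ℂ) * z t := by
    intro t
    simp only [hzdef]
    push_cast [hrec t]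
    ring
  set u : ℕ → ℂ := fun t => z (t + 1) - r₂ * z t with hudef
  have hu_rec : ∀ t, u (t + 1) = r₁ * u t := by
    intro t
    simp only [hudef]
    linear_combination hz t - z (t + 1) * hsum + z t * hprod
  have hu_eq : ∀ t, u t = r₁ ^ t * u 0 := by
    intro t
    induction t with
    | zero => simp
    | succ t ih => rw [hu_rec t, ih]; ring
  have hu_tendsto : Tendsto u atTop (nhds 0) := by
    have hpow : Tendsto (fun t : ℕ => r₁ ^ t) atTop (nhds 0) :=
      tendsto_pow_atTop_nhds_zero_of_norm_lt_one h1
    have := hpow.mul_const (u 0)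
    rw [zero_mul] at this
    exact Tendsto.congr (fun t => (hu_eq t).symm) this
  have hzt : Tendsto z atTop (nhds 0) := by
    apply geom_perturb h2 z u hu_tendsto
    intro t
    simp only [hudef]
    ring
  have : Tendsto (fun t => (z t).re) atTop (nhds (0 : ℂ).re) :=
    (Complex.continuous_re.tendsto 0).comp hzt
  simpa [hzdef] using this

set_option maxHeartbeats 1000000 in
theorem ema_momentum_gd_converges
    (lam β η : ℝ) (hlam : 0 < lam) (hβ0 : 0 ≤ β) (hβ1 : β < 1) (hη : 0 < η)
    (hthresh : lam < (2 + 2 * β) / (η * (1 - β)))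
    (θ m : ℕ → ℝ)
    (hm : ∀ t, m (t + 1) = β * m t + (1 - β) * (lam * θ t))
    (hθ : ∀ t, θ (t + 1) = θ t - η * m (t + 1)) :
    Tendsto θ atTop (nhds 0) ∧ Tendsto m atTop (nhds 0) := by
  have hden : 0 < η * (1 - β) := by nlinarith
  obtain ⟨c, hcdef⟩ : ∃ c, c = η * (1 - β) * lam := ⟨_, rfl⟩
  have hc0 : 0 < c := by rw [hcdef]; exact mul_pos hden hlam
  have hc2 : c < 2 + 2 * β := by
    have h' : lam * (η * (1 - β)) < 2 + 2 * β := (lt_div_iff₀ hden).mp hthresh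
    nlinarith [h']
  obtain ⟨T, hTdef⟩ : ∃ T, T = 1 + β - c := ⟨_, rfl⟩
  have hT1 : T < 1 + β := by rw [hTdef]; linarith
  have hTm1 : -(1 + β) < T := by rw [hTdef]; linarith
  have hT2 : T < 2 := by linarith
  have hTm2 : -2 < T := by linarith
  -- second-order recurrence for θ
  have hrec : ∀ t, θ (t + 2) = T * θ (t + 1) - β * θ t := by
    intro t
    have e1 : θ (t + 2) = θ (t + 1) - η * m (t + 2) := hθ (t + 1)
    have e2 : m (t + 2) = β * m (t + 1) + (1 - β) * (lam * θ (t + 1)) := hm (t + 1)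
    have e3 : η * m (t + 1) = θ t - θ (t + 1) := by have := hθ t; linarith
    rw [e1, e2]
    linear_combination -β * e3 - θ (t + 1) * hTdef + θ (t + 1) * hcdef
  -- find complex roots of x² - T x + β with norm < 1
  obtain ⟨r₁, r₂, hsum, hprod, h1, h2⟩ :
      ∃ r₁ r₂ : ℂ, r₁ + r₂ = (T : ℂ) ∧ r₁ * r₂ = (β : ℂ) ∧ ‖r₁‖ < 1 ∧ ‖r₂‖ < 1 := by
    rcases le_or_gt (4 * β) (T ^ 2) with hΔ | hΔ
    · -- real roots
      obtain ⟨s, hsdef⟩ : ∃ s, s = Real.sqrt (T ^ 2 - 4 * β) := ⟨_, rfl⟩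
      have hs0 : 0 ≤ s := hsdef ▸ Real.sqrt_nonneg _
      have hs2 : s ^ 2 = T ^ 2 - 4 * β := by
        rw [hsdef]; exact Real.sq_sqrt (by linarith)
      have hplus : s < 2 - T := by nlinarith [hs2, hs0, hT1, hT2, hβ1]
      have hminus : s < T + 2 := by nlinarith [hs2, hs0, hTm1, hTm2, hβ1]
      refine ⟨(((T + s) / 2 : ℝ) : ℂ), (((T - s) / 2 : ℝ) : ℂ), ?_, ?_, ?_, ?_⟩
      · push_cast; ring
      · have hre : ((T + s) / 2) * ((T - s) / 2) = β := by linear_combination (-1/4) * hs2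
        exact_mod_cast congrArg (fun x : ℝ => (x : ℂ)) hre
      · rw [Complex.norm_real, Real.norm_eq_abs, abs_lt]
        constructor <;> nlinarith
      · rw [Complex.norm_real, Real.norm_eq_abs, abs_lt]
        constructor <;> nlinarith
    · -- complex conjugate roots
      have hβ01 : 0 < β := by nlinarith [sq_nonneg T]
      obtain ⟨s, hsdef⟩ : ∃ s, s = Real.sqrt (4 * β - T ^ 2) := ⟨_, rfl⟩
      have hs0 : 0 ≤ s := hsdef ▸ Real.sqrt_nonneg _
      have hs2 : s ^ 2 = 4 * β - T ^ 2 := by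
        rw [hsdef]; exact Real.sq_sqrt (by linarith)
      have hrsum : (T / 2) ^ 2 + (s / 2) ^ 2 = β := by linear_combination (1/4) * hs2
      have hn1 : ‖((T / 2 : ℝ) : ℂ) + ((s / 2 : ℝ) : ℂ) * Complex.I‖ ^ 2 = β := by
        rw [← Complex.normSq_eq_norm_sq, Complex.normSq_apply]
        simp only [Complex.add_re, Complex.ofReal_re, Complex.mul_re, Complex.I_re,
          Complex.ofReal_im, Complex.I_im, Complex.add_im, Complex.mul_im]
        nlinarith [hrsum]
      have hn2 : ‖((T / 2 : ℝ) : ℂ) - ((s / 2 : ℝ) : ℂ) * Complex.I‖ ^ 2 = β := by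
        rw [← Complex.normSq_eq_norm_sq, Complex.normSq_apply]
        simp only [Complex.sub_re, Complex.ofReal_re, Complex.mul_re, Complex.I_re,
          Complex.ofReal_im, Complex.I_im, Complex.sub_im, Complex.mul_im]
        nlinarith [hrsum]
      refine ⟨((T / 2 : ℝ) : ℂ) + ((s / 2 : ℝ) : ℂ) * Complex.I,
              ((T / 2 : ℝ) : ℂ) - ((s / 2 : ℝ) : ℂ) * Complex.I, ?_, ?_, ?_, ?_⟩
      · push_cast; ring
      · have hc : ((T / 2 : ℝ) : ℂ) ^ 2 + ((s / 2 : ℝ) : ℂ) ^ 2 = (β : ℂ) := by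
          exact_mod_cast congrArg (fun x : ℝ => (x : ℂ)) hrsum
        linear_combination hc - ((s / 2 : ℝ) : ℂ) ^ 2 * Complex.I_sq
      · nlinarith [hn1, norm_nonneg (((T / 2 : ℝ) : ℂ) + ((s / 2 : ℝ) : ℂ) * Complex.I), hβ1]
      · nlinarith [hn2, norm_nonneg (((T / 2 : ℝ) : ℂ) - ((s / 2 : ℝ) : ℂ) * Complex.I), hβ1]
  have hθ0 : Tendsto θ atTop (nhds 0) :=
    second_order_tendsto T β r₁ r₂ hsum hprod h1 h2 θ hrec
  refine ⟨hθ0, ?_⟩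
  have hθshift : Tendsto (fun t => θ (t + 1)) atTop (nhds 0) :=
    hθ0.comp (tendsto_add_atTop_nat 1)
  have hm1 : Tendsto (fun t => m (t + 1)) atTop (nhds 0) := by
    have h3 : Tendsto (fun t => (θ t - θ (t + 1)) / η) atTop (nhds ((0 - 0) / η)) :=
      (hθ0.sub hθshift).div_const η
    rw [sub_zero, zero_div] at h3
    refine h3.congr fun t => ?_
    have := hθ t
    field_simp
    linarith
  exact (tendsto_add_atTop_iff_nat 1).mp hm1
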